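/- Let n be a natural number, set N = 2n+1, let a < b be real numbers, let t_0, …, t_n ∈ [a, b] be pairwise distinct, and let x : ℝ → ℝ be (N+1)-times continuously differentiable on [a, b]. Let p be the unique polynomial of degree at most N satisfying p(t_i) = x(t_i) and p'(t_i) = x'(t_i) for all i. Then for every t ∈ [a, b] there exists ξ ∈ [a, b] such that x(t) - p(t) = (x^{(N+1)}(ξ)/(N+1)!) · ∏_{i=0}^{n} (t - t_i)^2. -/

import Mathlib

open Polynomial Set

private lemma contDiff_polyeval {n : WithTop ℕ∞} (q : ℝ[X]) :
    ContDiff ℝ n fun s : ℝ => q.eval s := by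
  induction q using Polynomial.induction_on' with
  | add p q hp hq => simpa [Polynomial.eval_add] using hp.add hq
  | monomial k c =>
      simpa [Polynomial.eval_monomial] using (contDiff_const.mul (contDiff_id.pow k) :
        ContDiff ℝ n fun s : ℝ => c * s ^ k)

/-- Iterated Rolle: a `C^k` function with `k+1` distinct zeros in `[a,b]` has a zero of its
`k`-th derivative (within `[a,b]`). -/
private lemma iterated_rolle (k : ℕ) (a b : ℝ) (f : ℝ → ℝ)
    (hf : ContDiffOn ℝ k f (Set.Icc a b))
    (z : Fin (k + 1) → ℝ) (hz : StrictMono z)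
    (hmem : ∀ i, z i ∈ Set.Icc a b) (hzero : ∀ i, f (z i) = 0) :
    ∃ ξ ∈ Set.Icc a b, iteratedDerivWithin k f (Set.Icc a b) ξ = 0 := by
  induction k generalizing f with
  | zero => exact ⟨z 0, hmem 0, by simpa using hzero 0⟩
  | succ k IH =>
    have hab : a < b := by
      have h01 : z 0 < z 1 := hz (by simp [Fin.lt_def])
      exact lt_of_le_of_lt (hmem 0).1 (lt_of_lt_of_le h01 (hmem 1).2)
    have hud : UniqueDiffOn ℝ (Set.Icc a b) := uniqueDiffOn_Icc hab
    -- Rolle between consecutive zeros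
    have hroll : ∀ i : Fin (k + 1), ∃ c ∈ Set.Ioo (z i.castSucc) (z i.succ), deriv f c = 0 := by
      intro i
      have hlt : z i.castSucc < z i.succ := hz (by simp [Fin.lt_def])
      refine exists_deriv_eq_zero hlt ?_ (by rw [hzero, hzero])
      exact hf.continuousOn.mono (Set.Icc_subset_Icc (hmem i.castSucc).1 (hmem i.succ).2)
    choose w hw hw0 using hroll
    set g := derivWithin f (Set.Icc a b) with hg
    have hwIoo : ∀ i, w i ∈ Set.Ioo a b := fun i =>
      ⟨lt_of_le_of_lt (hmem i.castSucc).1 (hw i).1, lt_of_lt_of_le (hw i).2 (hmem i.succ).2⟩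
    have hwg : ∀ i, g (w i) = 0 := by
      intro i
      rw [hg, derivWithin_of_mem_nhds (Icc_mem_nhds (hwIoo i).1 (hwIoo i).2)]
      exact hw0 i
    have hwmono : StrictMono w := by
      intro i j hij
      have h1 : w i < z i.succ := (hw i).2
      have h2 : z j.castSucc < w j := (hw j).1
      have h3 : z i.succ ≤ z j.castSucc := hz.monotone (by simp [Fin.le_def]; omega)
      exact lt_of_lt_of_le h1 (le_trans h3 h2.le)
    have hgcd : ContDiffOn ℝ k g (Set.Icc a b) :=
      hf.derivWithin hud (by exact_mod_cast le_refl ((k : WithTop ℕ∞) + 1))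
    obtain ⟨ξ, hξ, hξ0⟩ := IH g hgcd w hwmono
      (fun i => ⟨(hwIoo i).1.le, (hwIoo i).2.le⟩) hwg
    refine ⟨ξ, hξ, ?_⟩
    rw [iteratedDerivWithin_succ']
    exact hξ0

private lemma poly_iteratedDerivWithin (k : ℕ) (q : ℝ[X]) {s : Set ℝ}
    (hs : UniqueDiffOn ℝ s) :
    ∀ y ∈ s, iteratedDerivWithin k (fun z => q.eval z) s y
      = (Polynomial.derivative^[k] q).eval y := by
  induction k generalizing q with
  | zero => intro y _; simp
  | succ k IH =>
    intro y hy
    rw [iteratedDerivWithin_succ']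
    have hcongr : Set.EqOn (derivWithin (fun z => q.eval z) s)
        (fun z => q.derivative.eval z) s := by
      intro u hu
      exact Polynomial.derivWithin (𝕜 := ℝ) (p := q) (hs.uniqueDiffWithinAt hu)
    rw [iteratedDerivWithin_congr hcongr hy, IH q.derivative y hy,
      Function.iterate_succ_apply]

private lemma iterate_derivative_monic (q : ℝ[X]) (hq : q.Monic) :
    Polynomial.derivative^[q.natDegree] q = Polynomial.C (q.natDegree.factorial : ℝ) := by
  have hdeg : (Polynomial.derivative^[q.natDegree] q).natDegree ≤ 0 := by
    simpa using q.natDegree_iterate_derivative q.natDegree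
  rw [Polynomial.eq_C_of_natDegree_le_zero hdeg, Polynomial.coeff_iterate_derivative]
  simp [Nat.descFactorial_self, hq.coeff_natDegree]

theorem hermite_interpolation_error
    (n : ℕ) (N : ℕ) (hN : N = 2 * n + 1)
    (a b : ℝ) (hab : a < b)
    (ts : Fin (n + 1) → ℝ) (hts : Function.Injective ts)
    (htsmem : ∀ i, ts i ∈ Set.Icc a b)
    (x : ℝ → ℝ) (hx : ContDiffOn ℝ (N + 1) x (Set.Icc a b))
    (p : Polynomial ℝ) (hdeg : p.degree ≤ (N : ℕ))
    (hval : ∀ i, p.eval (ts i) = x (ts i))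
    (hder : ∀ i, p.derivative.eval (ts i) = derivWithin x (Set.Icc a b) (ts i)) :
    ∀ t ∈ Set.Icc a b, ∃ ξ ∈ Set.Icc a b,
      x t - p.eval t
        = iteratedDerivWithin (N + 1) x (Set.Icc a b) ξ / (Nat.factorial (N + 1) : ℝ)
          * ∏ i, (t - ts i) ^ 2 := by
  intro t ht
  have hud : UniqueDiffOn ℝ (Set.Icc a b) := uniqueDiffOn_Icc hab
  by_cases hc : ∃ i, t = ts i
  · obtain ⟨i, rfl⟩ := hc
    refine ⟨ts i, ht, ?_⟩
    rw [hval i, Finset.prod_eq_zero (Finset.mem_univ i) (by simp)]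
    ring
  push_neg at hc
  -- the node polynomial
  set Q : ℝ[X] := ∏ i, (Polynomial.X - Polynomial.C (ts i)) ^ 2 with hQ
  have hQeval : ∀ s : ℝ, Q.eval s = ∏ i, (s - ts i) ^ 2 := by
    intro s; simp [hQ, Polynomial.eval_prod]
  have hQt : Q.eval t ≠ 0 := by
    rw [hQeval]
    exact Finset.prod_ne_zero_iff.2 fun i _ => pow_ne_zero _ (sub_ne_zero.2 (hc i))
  have hQmonic : Q.Monic :=
    Polynomial.monic_prod_of_monic _ _ fun i _ => (Polynomial.monic_X_sub_C _).pow 2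
  have hQdeg : Q.natDegree = N + 1 := by
    rw [hQ, Polynomial.natDegree_prod _ _ (fun i _ => pow_ne_zero _ (Polynomial.X_sub_C_ne_zero _))]
    simp [Polynomial.natDegree_pow, hN]; ring
  have hQ' : ∀ i, Q.derivative.eval (ts i) = 0 := by
    intro i
    obtain ⟨R, hR⟩ : (Polynomial.X - Polynomial.C (ts i)) ^ 2 ∣ Q :=
      Finset.dvd_prod_of_mem _ (Finset.mem_univ i)
    rw [hR, Polynomial.derivative_mul, Polynomial.derivative_pow]
    simp
  set K : ℝ := (x t - p.eval t) / Q.eval t with hK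
  set g : ℝ → ℝ := fun s => x s - (p.eval s + K * Q.eval s) with hgdef
  have hpc : ∀ (m : WithTop ℕ∞) (q : ℝ[X]),
      ContDiffOn ℝ m (fun s : ℝ => q.eval s) (Set.Icc a b) :=
    fun m q => (contDiff_polyeval q).contDiffOn
  have hgC : ContDiffOn ℝ (N + 1) g (Set.Icc a b) := by
    exact hx.sub ((hpc _ p).add ((contDiffOn_const.mul (hpc _ Q))))
  have hgts : ∀ i, g (ts i) = 0 := by
    intro i
    have h0 : Q.eval (ts i) = 0 := by
      rw [hQeval]; exact Finset.prod_eq_zero (Finset.mem_univ i) (by simp)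
    simp [hgdef, hval i, h0]
  have hgt : g t = 0 := by
    simp only [hgdef, hK]
    rw [div_mul_cancel₀ _ hQt]; ring
  -- zeros of g, sorted
  set Z : Finset ℝ := Finset.univ.image ts ∪ {t} with hZ
  have htZ : t ∉ Finset.univ.image ts := by
    simp only [Finset.mem_image, Finset.mem_univ, true_and, not_exists]
    intro i h; exact hc i h.symm
  have hZcard : Z.card = n + 2 := by
    rw [hZ, Finset.union_comm, Finset.card_union_of_disjoint (by simpa using htZ),
      Finset.card_image_of_injective _ hts]
    simp
    omega
  have hZmem : ∀ u ∈ Z, u ∈ Set.Icc a b ∧ g u = 0 := by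
    intro u hu
    rw [hZ, Finset.mem_union] at hu
    rcases hu with hu | hu
    · obtain ⟨i, _, rfl⟩ := Finset.mem_image.1 hu
      exact ⟨htsmem i, hgts i⟩
    · rw [Finset.mem_singleton] at hu; subst hu; exact ⟨ht, hgt⟩
  set z : Fin (n + 2) → ℝ := fun i => Z.orderEmbOfFin hZcard i with hz
  have hzmono : StrictMono z := Z.orderEmbOfFin hZcard |>.strictMono
  have hzZ : ∀ i, z i ∈ Z := fun i => Z.orderEmbOfFin_mem hZcard i
  -- Rolle points for g
  have hroll : ∀ i : Fin (n + 1), ∃ c ∈ Set.Ioo (z i.castSucc) (z i.succ), deriv g c = 0 := by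
    intro i
    have hlt : z i.castSucc < z i.succ := hzmono (by simp [Fin.lt_def])
    refine exists_deriv_eq_zero hlt ?_ ?_
    · exact hgC.continuousOn.mono
        (Set.Icc_subset_Icc (hZmem _ (hzZ i.castSucc)).1.1 (hZmem _ (hzZ i.succ)).1.2)
    · rw [(hZmem _ (hzZ i.castSucc)).2, (hZmem _ (hzZ i.succ)).2]
  choose w hw hw0 using hroll
  set g1 : ℝ → ℝ := derivWithin g (Set.Icc a b) with hg1
  have hwIoo : ∀ i, w i ∈ Set.Ioo a b := fun i =>
    ⟨lt_of_le_of_lt (hZmem _ (hzZ i.castSucc)).1.1 (hw i).1,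
     lt_of_lt_of_le (hw i).2 (hZmem _ (hzZ i.succ)).1.2⟩
  have hwg1 : ∀ i, g1 (w i) = 0 := by
    intro i
    rw [hg1, derivWithin_of_mem_nhds (Icc_mem_nhds (hwIoo i).1 (hwIoo i).2)]
    exact hw0 i
  -- derivWithin of g vanishes at the nodes
  have hdiffx : DifferentiableOn ℝ x (Set.Icc a b) :=
    hx.differentiableOn (by exact_mod_cast Nat.succ_ne_zero N)
  have htsg1 : ∀ i, g1 (ts i) = 0 := by
    intro i
    have hu : UniqueDiffWithinAt ℝ (Set.Icc a b) (ts i) := hud _ (htsmem i)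
    have hdp : DifferentiableWithinAt ℝ (fun s => p.eval s + K * Q.eval s)
        (Set.Icc a b) (ts i) :=
      (((contDiff_polyeval p).differentiable (by exact (WithTop.coe_ne_top (a := (0:ℕ∞))).symm)).differentiableAt.add
        (((contDiff_polyeval Q).differentiable (by exact (WithTop.coe_ne_top (a := (0:ℕ∞))).symm)).differentiableAt.const_mul
          K)).differentiableWithinAt
    rw [hg1, hgdef]
    rw [derivWithin_fun_sub (hdiffx _ (htsmem i)) hdp]
    have : derivWithin (fun s => p.eval s + K * Q.eval s) (Set.Icc a b) (ts i)
        = p.derivative.eval (ts i) + K * Q.derivative.eval (ts i) := by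
      rw [DifferentiableAt.derivWithin _ hu]
      · rw [deriv_fun_add, deriv_const_mul, Polynomial.deriv, Polynomial.deriv]
        · exact ((contDiff_polyeval Q).differentiable (by exact (WithTop.coe_ne_top (a := (0:ℕ∞))).symm)).differentiableAt
        · exact ((contDiff_polyeval p).differentiable (by exact (WithTop.coe_ne_top (a := (0:ℕ∞))).symm)).differentiableAt
        · exact (((contDiff_polyeval Q).differentiable (by exact (WithTop.coe_ne_top (a := (0:ℕ∞))).symm)).differentiableAt.const_mul K)
      · exact (((contDiff_polyeval p).differentiable (by exact (WithTop.coe_ne_top (a := (0:ℕ∞))).symm)).differentiableAt.add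
          (((contDiff_polyeval Q).differentiable (by exact (WithTop.coe_ne_top (a := (0:ℕ∞))).symm)).differentiableAt.const_mul K))
    rw [this, hQ' i, hder i]
    ring
  -- nodes and Rolle points are all distinct
  have hwmono : StrictMono w := by
    intro i j hij
    have h3 : z i.succ ≤ z j.castSucc := hzmono.monotone (by simp [Fin.le_def]; omega)
    exact lt_of_lt_of_le (hw i).2 (le_trans h3 (hw j).1.le)
  have hdisj : ∀ i j, ts i ≠ w j := by
    intro i j hiw
    obtain ⟨k, hk⟩ : ∃ k, z k = ts i := by
      have hmemZ : ts i ∈ Z := by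
        rw [hZ, Finset.mem_union]
        exact Or.inl (Finset.mem_image.2 ⟨i, Finset.mem_univ i, rfl⟩)
      have hr : ts i ∈ Set.range (Z.orderEmbOfFin hZcard) := by
        rw [Finset.range_orderEmbOfFin]; exact_mod_cast hmemZ
      obtain ⟨k, hk⟩ := hr
      exact ⟨k, hk⟩
    have h1 : z j.castSucc < z k := hk ▸ (hiw ▸ (hw j).1)
    have h2 : z k < z j.succ := hk ▸ (hiw ▸ (hw j).2)
    have hk1 : (j.castSucc : Fin (n + 2)) < k := hzmono.lt_iff_lt.1 h1
    have hk2 : k < j.succ := hzmono.lt_iff_lt.1 h2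
    rw [Fin.lt_def] at hk1 hk2
    simp at hk1 hk2
    omega
  -- the combined zero set of g1
  set W : Finset ℝ := Finset.univ.image ts ∪ Finset.univ.image w with hW
  have hWcard : W.card = N + 1 := by
    rw [hW, Finset.card_union_of_disjoint, Finset.card_image_of_injective _ hts,
      Finset.card_image_of_injective _ hwmono.injective]
    · simp [hN]; ring
    · rw [Finset.disjoint_left]
      intro u hu1 hu2
      obtain ⟨i, _, rfl⟩ := Finset.mem_image.1 hu1
      obtain ⟨j, _, hj⟩ := Finset.mem_image.1 hu2
      exact hdisj i j hj.symm
  have hWmem : ∀ u ∈ W, u ∈ Set.Icc a b ∧ g1 u = 0 := by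
    intro u hu
    rw [hW, Finset.mem_union] at hu
    rcases hu with hu | hu
    · obtain ⟨i, _, rfl⟩ := Finset.mem_image.1 hu
      exact ⟨htsmem i, htsg1 i⟩
    · obtain ⟨j, _, rfl⟩ := Finset.mem_image.1 hu
      exact ⟨⟨(hwIoo j).1.le, (hwIoo j).2.le⟩, hwg1 j⟩
  set y : Fin (N + 1) → ℝ := fun i => W.orderEmbOfFin hWcard i with hy
  have hg1C : ContDiffOn ℝ N g1 (Set.Icc a b) :=
    hgC.derivWithin hud (by exact_mod_cast le_refl ((N : WithTop ℕ∞) + 1))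
  obtain ⟨ξ, hξmem, hξ0⟩ := iterated_rolle N a b g1 hg1C y
    (W.orderEmbOfFin hWcard).strictMono
    (fun i => (hWmem _ (W.orderEmbOfFin_mem hWcard i)).1)
    (fun i => (hWmem _ (W.orderEmbOfFin_mem hWcard i)).2)
  refine ⟨ξ, hξmem, ?_⟩
  -- compute the (N+1)-st derivative of g at ξ
  have hgiter : iteratedDerivWithin (N + 1) g (Set.Icc a b) ξ = 0 := by
    rw [iteratedDerivWithin_succ']
    exact hξ0
  have hsplit : iteratedDerivWithin (N + 1) g (Set.Icc a b) ξ
      = iteratedDerivWithin (N + 1) x (Set.Icc a b) ξ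
        - iteratedDerivWithin (N + 1) (fun s => (p + Polynomial.C K * Q).eval s)
            (Set.Icc a b) ξ := by
    have : g = x - fun s => (p + Polynomial.C K * Q).eval s := by
      funext s; simp [hgdef]
    rw [this]
    exact iteratedDerivWithin_sub hξmem hud (by exact_mod_cast hx ξ hξmem) (hpc _ _ ξ hξmem)
  have hpoly : iteratedDerivWithin (N + 1) (fun s => (p + Polynomial.C K * Q).eval s)
      (Set.Icc a b) ξ = K * (N + 1).factorial := by
    rw [poly_iteratedDerivWithin (N + 1) _ hud ξ hξmem]
    have hp0 : Polynomial.derivative^[N + 1] p = 0 :=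
      Polynomial.iterate_derivative_eq_zero
        (Nat.lt_succ_of_le (Polynomial.natDegree_le_iff_degree_le.2 hdeg))
    have hQiter : Polynomial.derivative^[N + 1] Q
        = Polynomial.C ((N + 1).factorial : ℝ) := by
      have := iterate_derivative_monic Q hQmonic
      rwa [hQdeg] at this
    rw [iterate_map_add, hp0, Polynomial.iterate_derivative_C_mul, hQiter]
    simp
  have hxiter : iteratedDerivWithin (N + 1) x (Set.Icc a b) ξ = K * (N + 1).factorial := by
    rw [hsplit, hpoly] at hgiter
    linarith
  rw [hxiter, ← hQeval, hK]
  rw [mul_div_assoc, div_self (by positivity : ((N + 1).factorial : ℝ) ≠ 0), mul_one,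
    div_mul_cancel₀ _ hQt]
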